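/- Let a, b, c, d be four points on an x-monotone polygonal terrain T with x(a) < x(b) < x(c) < x(d). If a sees c and b sees d (where two points see each other iff the segment between them contains no point strictly below T), then a sees d. -/

import Mathlib

/-- Euclidean distance between two points of `ℝ × ℝ`. -/
noncomputable def edist2 (p q : ℝ × ℝ) : ℝ :=
  Real.sqrt ((p.1 - q.1) ^ 2 + (p.2 - q.2) ^ 2)

/-- `p` sees `q` over the terrain given by `f`: every point of the segment
`[p, q]` lies weakly above the graph of `f`. -/
def sees (f : ℝ → ℝ) (p q : ℝ × ℝ) : Prop :=
  ∀ t : ℝ, t ∈ Set.Icc (0 : ℝ) 1 →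
    (1 - t) * p.2 + t * q.2 ≥ f ((1 - t) * p.1 + t * q.1)

lemma sees_iff_aux (f : ℝ → ℝ) (p q : ℝ × ℝ) (h : p.1 < q.1) :
    sees f p q ↔ ∀ x ∈ Set.Icc p.1 q.1,
      (q.1 - p.1) * f x ≤ (q.1 - x) * p.2 + (x - p.1) * q.2 := by
  have hpq : (0:ℝ) < q.1 - p.1 := sub_pos.2 h
  constructor
  · intro hs x hx
    have ht : (x - p.1) / (q.1 - p.1) ∈ Set.Icc (0:ℝ) 1 :=
      ⟨div_nonneg (by linarith [hx.1]) hpq.le,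
       (div_le_one hpq).mpr (by linarith [hx.2])⟩
    have h1 := hs _ ht
    have hx1 : (1 - (x - p.1) / (q.1 - p.1)) * p.1 + (x - p.1) / (q.1 - p.1) * q.1 = x := by
      field_simp
      ring
    have hx2 : (1 - (x - p.1) / (q.1 - p.1)) * p.2 + (x - p.1) / (q.1 - p.1) * q.2
        = ((q.1 - x) * p.2 + (x - p.1) * q.2) / (q.1 - p.1) := by
      field_simp
      ring
    rw [hx1, hx2] at h1
    calc (q.1 - p.1) * f x ≤ (q.1 - p.1) * (((q.1 - x) * p.2 + (x - p.1) * q.2) / (q.1 - p.1)) :=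
          mul_le_mul_of_nonneg_left h1 hpq.le
      _ = (q.1 - x) * p.2 + (x - p.1) * q.2 := by field_simp
  · intro hs t ht
    set x := (1 - t) * p.1 + t * q.1 with hxdef
    have hxmem : x ∈ Set.Icc p.1 q.1 := by
      constructor
      · have : x - p.1 = t * (q.1 - p.1) := by rw [hxdef]; ring
        nlinarith [mul_nonneg ht.1 hpq.le]
      · have : q.1 - x = (1 - t) * (q.1 - p.1) := by rw [hxdef]; ring
        nlinarith [mul_nonneg (by linarith [ht.2] : (0:ℝ) ≤ 1 - t) hpq.le]
    have h1 := hs x hxmem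
    have h2 : (q.1 - x) * p.2 + (x - p.1) * q.2 = (q.1 - p.1) * ((1 - t) * p.2 + t * q.2) := by
      rw [hxdef]; ring
    rw [h2] at h1
    have := le_of_mul_le_mul_left h1 hpq
    exact this

/-- The order claim for 1.5D terrains. -/
theorem order_claim (f : ℝ → ℝ) (hf : Continuous f)
    (xa xb xc xd : ℝ) (hab : xa < xb) (hbc : xb < xc) (hcd : xc < xd)
    (hac : sees f (xa, f xa) (xc, f xc))
    (hbd : sees f (xb, f xb) (xd, f xd)) :
    sees f (xa, f xa) (xd, f xd) := by
  set ya := f xa with hya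
  set yb := f xb with hyb
  set yc := f xc with hyc
  set yd := f xd with hyd
  have hac' := (sees_iff_aux f (xa, ya) (xc, yc) (by simpa using hbc.trans' hab)).mp hac
  have hbd' := (sees_iff_aux f (xb, yb) (xd, yd) (by simpa using hcd.trans' hbc)).mp hbd
  simp only at hac' hbd'
  rw [sees_iff_aux f (xa, ya) (xd, yd) (by simp; linarith)]
  simp only
  -- basic positivity facts
  have pba : (0:ℝ) < xb - xa := by linarith
  have pcb : (0:ℝ) < xc - xb := by linarith
  have pdc : (0:ℝ) < xd - xc := by linarith
  have pca : (0:ℝ) < xc - xa := by linarith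
  have pdb : (0:ℝ) < xd - xb := by linarith
  have pda : (0:ℝ) < xd - xa := by linarith
  -- a sees c, evaluated at xb
  have H3 : (xc - xa) * yb ≤ (xc - xb) * ya + (xb - xa) * yc :=
    hac' xb ⟨hab.le, hbc.le⟩
  -- b sees d, evaluated at xc
  have H4 : (xd - xb) * yc ≤ (xd - xc) * yb + (xc - xb) * yd :=
    hbd' xc ⟨hbc.le, hcd.le⟩
  have s3 : (0:ℝ) ≤ (xc - xb) * ya + (xb - xa) * yc - (xc - xa) * yb := by linarith
  have s4 : (0:ℝ) ≤ (xd - xc) * yb + (xc - xb) * yd - (xd - xb) * yc := by linarith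
  -- Key: a lies weakly above line bd
  have keyT : (0:ℝ) ≤ (xd - xb) * ya - (xd - xa) * yb - (xa - xb) * yd := by
    have hid : (xc - xb) * ((xd - xb) * ya - (xd - xa) * yb - (xa - xb) * yd)
        = (xd - xb) * ((xc - xb) * ya + (xb - xa) * yc - (xc - xa) * yb)
          + (xb - xa) * ((xd - xc) * yb + (xc - xb) * yd - (xd - xb) * yc) := by ring
    nlinarith [mul_nonneg pdb.le s3, mul_nonneg pba.le s4]
  -- Q: c lies weakly below line ad
  have Q : (0:ℝ) ≤ (xd - xc) * ya + (xc - xa) * yd - (xd - xa) * yc := by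
    have hid : (xd - xb) * ((xd - xc) * ya + (xc - xa) * yd - (xd - xa) * yc)
        = (xd - xc) * ((xd - xb) * ya - (xd - xa) * yb - (xa - xb) * yd)
          + (xd - xa) * ((xd - xc) * yb + (xc - xb) * yd - (xd - xb) * yc) := by ring
    nlinarith [mul_nonneg pdc.le keyT, mul_nonneg pda.le s4]
  intro x hx
  rcases le_total x xc with hxc | hxc
  · -- left part: use segment a–c
    have G1 : (xc - xa) * f x ≤ (xc - x) * ya + (x - xa) * yc := hac' x ⟨hx.1, hxc⟩
    have hid : (xc - xa) * ((xd - x) * ya + (x - xa) * yd)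
        = (xd - xa) * ((xc - x) * ya + (x - xa) * yc)
          + (x - xa) * ((xd - xc) * ya + (xc - xa) * yd - (xd - xa) * yc) := by ring
    have hxa : (0:ℝ) ≤ x - xa := by linarith [hx.1]
    have step : (xc - xa) * ((xd - xa) * f x) ≤ (xc - xa) * ((xd - x) * ya + (x - xa) * yd) := by
      nlinarith [mul_le_mul_of_nonneg_left G1 pda.le, mul_nonneg hxa Q]
    exact le_of_mul_le_mul_left step pca
  · -- right part: use segment b–d
    have G2 : (xd - xb) * f x ≤ (xd - x) * yb + (x - xb) * yd := hbd' x ⟨by linarith, hx.2⟩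
    have hid : (xd - xb) * ((xd - x) * ya + (x - xa) * yd)
        = (xd - xa) * ((xd - x) * yb + (x - xb) * yd)
          + (xd - x) * ((xd - xb) * ya - (xd - xa) * yb - (xa - xb) * yd) := by ring
    have hxd : (0:ℝ) ≤ xd - x := by linarith [hx.2]
    have step : (xd - xb) * ((xd - xa) * f x) ≤ (xd - xb) * ((xd - x) * ya + (x - xa) * yd) := by
      nlinarith [mul_le_mul_of_nonneg_left G2 pda.le, mul_nonneg hxd keyT]
    exact le_of_mul_le_mul_left step pdb
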